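/- Let k ≥ 2. Consider the (k-1)×(k-1) tridiagonal-plus-column linear system on unknowns (x₀, x₁, ..., x_{k-2}): x₁ + t₀x₀ = 0; x₁ + x₂ + t₁x₀ = 0; x_{j-1} + x_j + x_{j+1} + t_j x₀ = 0 for 2 ≤ j ≤ k-3; and x_{k-3} + 2x_{k-2} + t_{k-2}x₀ = 0, where t₀ = a_{2k,2k-3}+a_{2k,0}-k, t₁ = a_{2k,2k-4}+a_{2k,1}-k, t_j = a_{2k,2k-j-3}+a_{2k,j} otherwise, with a_{m,s} = ((m+2s+3)/(2(m-1)))C(m-1,s+2). Then this homogeneous linear system has only the trivial solution x₀ = x₁ = ... = x_{k-2} = 0. -/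

import Mathlib

/-- The coefficient `a_{m,s} = ((m+2s+3)/(2(m-1))) * C(m-1, s+2)` as a rational number. -/
def acoef (m s : ℕ) : ℚ :=
  ((m : ℚ) + 2 * s + 3) / (2 * ((m : ℚ) - 1)) * (Nat.choose (m - 1) (s + 2))

private def eaux (c : ℕ) : ℚ :=
  if c = 0 then 2 else if c = 1 then 1 else if c = 2 then -1
  else if c = 3 then -2 else if c = 4 then -1 else 1

private def G (n b : ℕ) : ℚ :=
  ∑ r ∈ Finset.range (n+1), if r % 3 = b then (n.choose r : ℚ) else 0

private def yv (k j : ℕ) : ℚ := if j % 3 = k % 3 then -2 else 1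

private def tq (k j : ℕ) : ℚ :=
  acoef (2*k) (2*k-j-3) + acoef (2*k) j - (if j ≤ 1 then (k:ℚ) else 0)

private lemma eaux_step {c : ℕ} (hc : c < 6) :
    eaux ((c+1) % 6) = eaux c + eaux ((c+2) % 6) := by
  interval_cases c <;> norm_num [eaux]

private lemma G_succ (n b : ℕ) (hb : b < 3) :
    G (n+1) b = G n b + G n ((b+2) % 3) := by
  unfold G
  rw [Finset.sum_range_succ' (fun r => if r % 3 = b then ((n+1).choose r : ℚ) else 0) (n+1)]
  have h1 : ∀ i ∈ Finset.range (n+1),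
      (if (i+1) % 3 = b then ((n+1).choose (i+1) : ℚ) else 0)
      = (if i % 3 = (b+2) % 3 then (n.choose i : ℚ) else 0)
        + (if (i+1) % 3 = b then (n.choose (i+1) : ℚ) else 0) := by
    intro i _
    have hiff : (i+1) % 3 = b ↔ i % 3 = (b+2) % 3 := by omega
    by_cases h : (i+1) % 3 = b
    · rw [if_pos h, if_pos (hiff.mp h), if_pos h, Nat.choose_succ_succ]
      push_cast; ring
    · rw [if_neg h, if_neg (fun hh => h (hiff.mpr hh)), if_neg h, add_zero]
  rw [Finset.sum_congr rfl h1, Finset.sum_add_distrib]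
  have h2 : (∑ i ∈ Finset.range (n+1), if (i+1) % 3 = b then (n.choose (i+1) : ℚ) else 0)
      + (if 0 % 3 = b then (((n+1).choose 0 : ℕ) : ℚ) else 0)
      = ∑ r ∈ Finset.range (n+1), if r % 3 = b then (n.choose r : ℚ) else 0 := by
    rw [Finset.sum_range_succ]
    rw [Finset.sum_range_succ' (fun r => if r % 3 = b then (n.choose r : ℚ) else 0) n]
    simp [Nat.choose_succ_self]
  push_cast at h2 ⊢
  linarith [h2]

private lemma G_closed : ∀ n : ℕ, ∀ b < 3, 3 * G n b = 2^n + eaux ((n + 4*b) % 6) := by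
  intro n
  induction n with
  | zero =>
    intro b hb
    interval_cases b <;> norm_num [G, eaux]
  | succ n ih =>
    intro b hb
    rw [G_succ n b hb, mul_add, ih b hb, ih ((b+2) % 3) (by omega)]
    have e1 : (n + 1 + 4*b) % 6 = ((n + 4*b) % 6 + 1) % 6 := by omega
    have e2 : (n + 4*((b+2) % 3)) % 6 = ((n + 4*b) % 6 + 2) % 6 := by omega
    rw [e1, e2]
    have hstep := eaux_step (c := (n + 4*b) % 6) (Nat.mod_lt _ (by norm_num))
    rw [pow_succ]
    linarith [hstep]

private lemma sum_choose_cast (n : ℕ) :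
    ∑ r ∈ Finset.range (n+1), ((n.choose r : ℕ) : ℚ) = 2^n := by
  rw [← Nat.cast_sum]
  exact_mod_cast congrArg (fun x : ℕ => (x : ℚ)) (Nat.sum_range_choose n)

private lemma sum2 (n : ℕ) :
    ∑ s ∈ Finset.range n, (((n+1).choose (s+2) : ℕ) : ℚ) = 2^(n+1) - (n+2) := by
  have h := sum_choose_cast (n+1)
  rw [Finset.sum_range_succ' (fun r => (((n+1).choose r : ℕ) : ℚ)) (n+1)] at h
  rw [Finset.sum_range_succ' (fun i => (((n+1).choose (i+1) : ℕ) : ℚ)) n] at h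
  norm_num at h
  have e : ∀ s : ℕ, s + 1 + 1 = s + 2 := fun s => rfl
  simp only [e] at h
  linarith

private lemma sum1 (n : ℕ) :
    ∑ s ∈ Finset.range n, ((n.choose (s+1) : ℕ) : ℚ) = 2^n - 1 := by
  have h := sum_choose_cast n
  rw [Finset.sum_range_succ' (fun r => ((n.choose r : ℕ) : ℚ)) n] at h
  norm_num at h
  linarith

private lemma acoef_eq (k s : ℕ) (hk : 1 ≤ k) :
    acoef (2*k) s = (((2*k-1).choose (s+2) : ℕ) : ℚ) / 2 + (((2*k-2).choose (s+1) : ℕ) : ℚ) := by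
  have hnat : (s+2) * (2*k-1).choose (s+2) = (2*k-1) * (2*k-2).choose (s+1) := by
    have h := Nat.add_one_mul_choose_eq (2*k-2) (s+1)
    have e : 2*k-2+1 = 2*k-1 := by omega
    rw [e] at h
    have e2 : s+1+1 = s+2 := rfl
    rw [e2] at h
    rw [mul_comm]
    exact h.symm
  have hQ : ((s:ℚ)+2) * (((2*k-1).choose (s+2) : ℕ) : ℚ)
      = (2*(k:ℚ)-1) * (((2*k-2).choose (s+1) : ℕ) : ℚ) := by
    have h2 := congrArg (fun x : ℕ => (x : ℚ)) hnat
    push_cast [Nat.cast_sub (show (1:ℕ) ≤ 2*k by omega)] at h2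
    linarith
  have hne : 2*(k:ℚ) - 1 ≠ 0 := by
    have : (1:ℚ) ≤ k := by exact_mod_cast hk
    intro h; linarith
  unfold acoef
  push_cast
  rw [div_mul_eq_mul_div, div_eq_iff (by intro h; apply hne; linarith)]
  ring_nf
  ring_nf at hQ
  linarith [hQ]

private lemma G_peel2 (n b : ℕ) :
    G (n+1) b = (∑ s ∈ Finset.range n, if (s+2) % 3 = b then (((n+1).choose (s+2) : ℕ) : ℚ) else 0)
      + (if 1 % 3 = b then ((n:ℚ)+1) else 0) + (if 0 % 3 = b then 1 else 0) := by
  unfold G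
  rw [Finset.sum_range_succ' (fun r => if r % 3 = b then (((n+1).choose r : ℕ) : ℚ) else 0) (n+1)]
  rw [Finset.sum_range_succ'
      (fun i => if (i+1) % 3 = b then (((n+1).choose (i+1) : ℕ) : ℚ) else 0) n]
  have e : ∀ s : ℕ, s + 1 + 1 = s + 2 := fun s => rfl
  simp only [e]
  push_cast [Nat.choose_one_right, Nat.choose_zero_right]
  ring

private lemma G_peel1 (n b : ℕ) :
    G n b = (∑ s ∈ Finset.range n, if (s+1) % 3 = b then ((n.choose (s+1) : ℕ) : ℚ) else 0)
      + (if 0 % 3 = b then 1 else 0) := by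
  unfold G
  rw [Finset.sum_range_succ' (fun r => if r % 3 = b then ((n.choose r : ℕ) : ℚ) else 0) n]
  push_cast [Nat.choose_zero_right]
  ring

private lemma Dval (k : ℕ) (hk : 4 ≤ k) :
    (∑ j ∈ Finset.range (k-1), yv k j * tq k j) = if k % 3 = 0 then -(1/2 : ℚ) else 1 := by
  have hsplit : (∑ j ∈ Finset.range (k-1), yv k j * tq k j)
      = ((∑ j ∈ Finset.range (k-1), yv k j * acoef (2*k) (2*k-j-3))
        + (∑ j ∈ Finset.range (k-1), yv k j * acoef (2*k) j))
        - (∑ j ∈ Finset.range (k-1), yv k j * (if j ≤ 1 then (k:ℚ) else 0)) := by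
    rw [← Finset.sum_add_distrib, ← Finset.sum_sub_distrib]
    exact Finset.sum_congr rfl (fun j _ => by unfold tq; ring)
  have hS3 : (∑ j ∈ Finset.range (k-1), yv k j * (if j ≤ 1 then (k:ℚ) else 0))
      = (yv k 0 + yv k 1) * k := by
    rw [← Finset.sum_subset (Finset.range_subset_range.mpr (show 2 ≤ k-1 by omega))
      (fun j _ hj => by
        rw [Finset.mem_range] at hj
        rw [if_neg (by omega), mul_zero])]
    rw [Finset.sum_range_succ, Finset.sum_range_one]
    norm_num
    ring
  have hS1 : (∑ j ∈ Finset.range (k-1), yv k j * acoef (2*k) (2*k-j-3))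
      = ∑ i ∈ Finset.range (k-1), yv k ((k-1)+i) * acoef (2*k) ((k-1)+i) := by
    rw [← Finset.sum_range_reflect (fun i => yv k ((k-1)+i) * acoef (2*k) ((k-1)+i)) (k-1)]
    refine Finset.sum_congr rfl (fun j hj => ?_)
    rw [Finset.mem_range] at hj
    have e1 : (k-1) + (k-1-1-j) = 2*k-j-3 := by omega
    rw [e1]
    congr 1
    unfold yv
    have hiff : ((2*k-j-3) % 3 = k % 3) ↔ (j % 3 = k % 3) := by omega
    rw [if_congr hiff rfl rfl]
  have hS12 : (∑ i ∈ Finset.range (k-1), yv k ((k-1)+i) * acoef (2*k) ((k-1)+i))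
      + (∑ j ∈ Finset.range (k-1), yv k j * acoef (2*k) j)
      = ∑ s ∈ Finset.range (2*k-2), yv k s * acoef (2*k) s := by
    have e : 2*k-2 = (k-1) + (k-1) := by omega
    rw [e, Finset.sum_range_add]
    ring
  have hpoint : ∀ s ∈ Finset.range (2*k-2), yv k s * acoef (2*k) s
      = (1/2) * (((2*k-1).choose (s+2) : ℕ) : ℚ) + (((2*k-2).choose (s+1) : ℕ) : ℚ)
        - (3/2) * (if s % 3 = k % 3 then (((2*k-1).choose (s+2) : ℕ) : ℚ) else 0)
        - 3 * (if s % 3 = k % 3 then (((2*k-2).choose (s+1) : ℕ) : ℚ) else 0) := by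
    intro s _
    rw [acoef_eq k s (by omega)]
    unfold yv
    by_cases h : s % 3 = k % 3
    · rw [if_pos h, if_pos h, if_pos h]; ring
    · rw [if_neg h, if_neg h, if_neg h]; ring
  rw [hsplit, hS3, hS1, hS12, Finset.sum_congr rfl hpoint]
  rw [Finset.sum_sub_distrib, Finset.sum_sub_distrib, Finset.sum_add_distrib,
    ← Finset.mul_sum, ← Finset.mul_sum, ← Finset.mul_sum]
  -- evaluate the four sums
  have e1 : 2*k-2+1 = 2*k-1 := by omega
  have hfull2 : ∑ s ∈ Finset.range (2*k-2), (((2*k-1).choose (s+2) : ℕ) : ℚ)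
      = 2^(2*k-1) - 2*(k:ℚ) := by
    have h := sum2 (2*k-2)
    rw [e1] at h
    rw [h]
    have : ((2*k-2 : ℕ) : ℚ) = 2*(k:ℚ) - 2 := by
      push_cast [Nat.cast_sub (show (2:ℕ) ≤ 2*k by omega)]; ring
    rw [this]; ring
  have hfull1 : ∑ s ∈ Finset.range (2*k-2), (((2*k-2).choose (s+1) : ℕ) : ℚ)
      = 2^(2*k-2) - 1 := sum1 (2*k-2)
  have hclass2 : ∑ s ∈ Finset.range (2*k-2),
        (if s % 3 = k % 3 then (((2*k-1).choose (s+2) : ℕ) : ℚ) else 0)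
      = G (2*k-1) ((k % 3+2) % 3) - (if 1 % 3 = (k % 3+2) % 3 then ((2*k-2 : ℕ):ℚ)+1 else 0)
        - (if 0 % 3 = (k % 3+2) % 3 then 1 else 0) := by
    have h := G_peel2 (2*k-2) ((k % 3+2) % 3)
    rw [e1] at h
    rw [Finset.sum_congr rfl (fun s _ => by
      have hiff : (s % 3 = k % 3) ↔ ((s+2) % 3 = (k % 3+2) % 3) := by omega
      rw [if_congr hiff rfl rfl])]
    push_cast at h ⊢
    linarith [h]
  have hclass1 : ∑ s ∈ Finset.range (2*k-2),
        (if s % 3 = k % 3 then (((2*k-2).choose (s+1) : ℕ) : ℚ) else 0)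
      = G (2*k-2) ((k % 3+1) % 3) - (if 0 % 3 = (k % 3+1) % 3 then 1 else 0) := by
    have h := G_peel1 (2*k-2) ((k % 3+1) % 3)
    rw [Finset.sum_congr rfl (fun s _ => by
      have hiff : (s % 3 = k % 3) ↔ ((s+1) % 3 = (k % 3+1) % 3) := by omega
      rw [if_congr hiff rfl rfl])]
    linarith [h]
  rw [hfull2, hfull1, hclass2, hclass1]
  have hG2 := G_closed (2*k-1) ((k % 3+2) % 3) (by omega)
  have hG1 := G_closed (2*k-2) ((k % 3+1) % 3) (by omega)
  have hp : (2:ℚ)^(2*k-1) = 2 * 2^(2*k-2) := by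
    rw [← pow_succ']
    congr 1
    omega
  rcases (show k % 3 = 0 ∨ k % 3 = 1 ∨ k % 3 = 2 by omega) with hc | hc | hc <;>
    rw [hc] at hG2 hG1 ⊢ <;>
    norm_num [yv, hc] at hG2 hG1 ⊢
  · rw [(show (2*k-1+4*((0+2) % 3)) % 6 = 1 by omega)] at hG2
    rw [(show (2*k-2+4) % 6 = 2 by omega)] at hG1
    norm_num [eaux] at hG1 hG2
    linarith
  · rw [(show (2*k-1) % 6 = 1 by omega)] at hG2
    rw [(show (2*k-2+8) % 6 = 2 by omega)] at hG1
    norm_num [eaux] at hG1 hG2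
    linarith
  · rw [(show (2*k-1+4) % 6 = 1 by omega)] at hG2
    rw [(show (2*k-2) % 6 = 2 by omega)] at hG1
    norm_num [eaux] at hG1 hG2
    have hcast : ((2*k-2 : ℕ) : ℚ) = 2*(k:ℚ) - 2 := by
      push_cast [Nat.cast_sub (show (2:ℕ) ≤ 2*k by omega)]; ring
    rw [hcast]
    linarith

private lemma yv_aux : ∀ a b : ℕ, a < 3 → b < 3 →
    (if a = b then (-2:ℚ) else 1) + (if (a+1) % 3 = b then (-2:ℚ) else 1)
      + (if (a+2) % 3 = b then (-2:ℚ) else 1) = 0 := by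
  intro a b ha hb
  interval_cases a <;> interval_cases b <;> norm_num

private lemma yv_cancel (k j : ℕ) : yv k j + yv k (j+1) + yv k (j+2) = 0 := by
  have h := yv_aux (j % 3) (k % 3) (Nat.mod_lt _ (by norm_num)) (Nat.mod_lt _ (by norm_num))
  unfold yv
  have e1 : (j+1) % 3 = (j % 3 + 1) % 3 := by omega
  have e2 : (j+2) % 3 = (j % 3 + 2) % 3 := by omega
  rw [e1, e2]
  exact h

/-- The homogeneous linear system with the `t_j`-column and tridiagonal band coming from
the recursion for even order Jacobi fields has only the trivial solution. -/
theorem linear_system_trivial_solution (k : ℕ) (hk : 2 ≤ k) (x : ℕ → ℚ)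
    (t : ℕ → ℚ)
    (ht : ∀ j, t j =
      acoef (2 * k) (2 * k - j - 3) + acoef (2 * k) j - (if j ≤ 1 then (k : ℚ) else 0))
    (h0 : x 1 + t 0 * x 0 = 0)
    (h1 : x 1 + x 2 + t 1 * x 0 = 0)
    (hj : ∀ j, 2 ≤ j → j ≤ k - 3 → x (j - 1) + x j + x (j + 1) + t j * x 0 = 0)
    (hlast : x (k - 3) + 2 * x (k - 2) + t (k - 2) * x 0 = 0) :
    ∀ j ≤ k - 2, x j = 0 := by
  rcases Nat.lt_or_ge k 4 with hk4 | hk4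
  · interval_cases k
    · -- k = 2
      intro j hjle
      interval_cases j
      have ht0 := ht 0
      have c1 : Nat.choose 3 3 = 1 := by decide
      have c2 : Nat.choose 3 2 = 3 := by decide
      norm_num [acoef, c1, c2] at ht0
      norm_num [ht0] at hlast
      linarith
    · -- k = 3
      have ht0 := ht 0
      have ht1 := ht 1
      have c1 : Nat.choose 5 5 = 1 := by decide
      have c2 : Nat.choose 5 2 = 10 := by decide
      have c3 : Nat.choose 5 4 = 5 := by decide
      have c4 : Nat.choose 5 3 = 10 := by decide
      norm_num [acoef, c1, c2, c3, c4] at ht0 ht1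
      norm_num [ht0] at h0
      norm_num [ht1] at hlast
      have hx0 : x 0 = 0 := by linarith
      intro j hjle
      interval_cases j
      · exact hx0
      · rw [hx0] at h0; linarith
  · -- k ≥ 4
    have htq : ∀ j, t j = tq k j := fun j => by rw [ht j]; rfl
    have key : ∀ m, 2 ≤ m → m ≤ k - 2 →
        (∑ j ∈ Finset.range m, yv k j * tq k j) * x 0
          + (yv k (m-2) + yv k (m-1)) * x (m-1) + yv k (m-1) * x m = 0 := by
      intro m hm
      induction m, hm using Nat.le_induction with
      | base =>
        intro _
        rw [Finset.sum_range_succ, Finset.sum_range_one]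
        have h0' := h0; rw [htq 0] at h0'
        have h1' := h1; rw [htq 1] at h1'
        norm_num
        linear_combination yv k 0 * h0' + yv k 1 * h1'
      | succ m hm ih =>
        intro hmk
        have ihm := ih (by omega)
        have e := hj m (by omega) (by omega)
        rw [htq m] at e
        have hc := yv_cancel k (m-2)
        rw [(show m-2+1 = m-1 by omega), (show m-2+2 = m by omega)] at hc
        rw [Finset.sum_range_succ]
        rw [(show m+1-2 = m-1 by omega), (show m+1-1 = m by omega)]
        linear_combination ihm + yv k m * e - x (m-1) * hc
    have hkey := key (k-2) (by omega) le_rfl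
    rw [(show k-2-2 = k-4 by omega), (show k-2-1 = k-3 by omega)] at hkey
    have hl := hlast
    rw [htq (k-2)] at hl
    have hc := yv_cancel k (k-4)
    rw [(show k-4+1 = k-3 by omega), (show k-4+2 = k-2 by omega)] at hc
    have hy3 : yv k (k-3) = -2 := by
      unfold yv; rw [if_pos (by omega)]
    have hy2 : yv k (k-2) = 1 := by
      unfold yv; rw [if_neg (by omega)]
    rw [hy3] at hkey
    rw [hy3] at hc
    rw [hy2] at hc
    have hD := Dval k hk4
    have hsum : (∑ j ∈ Finset.range (k-1), yv k j * tq k j)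
        = (∑ j ∈ Finset.range (k-2), yv k j * tq k j) + yv k (k-2) * tq k (k-2) := by
      rw [(show k-1 = k-2+1 by omega), Finset.sum_range_succ]
    have hx0 : x 0 = 0 := by
      have hDx : (∑ j ∈ Finset.range (k-1), yv k j * tq k j) * x 0 = 0 := by
        rw [hsum, hy2]
        linear_combination hkey + hl - x (k-3) * hc
      rw [hD] at hDx
      by_cases hc3 : k % 3 = 0
      · rw [if_pos hc3] at hDx; linarith
      · rw [if_neg hc3] at hDx; linarith
    intro j
    induction j using Nat.strong_induction_on with
    | _ j ih =>
      intro hjle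
      match j with
      | 0 => exact hx0
      | 1 => linear_combination h0 - t 0 * hx0
      | 2 =>
        have i1 := ih 1 (by omega) (by omega)
        linear_combination h1 - i1 - t 1 * hx0
      | (n+3) =>
        have e := hj (n+2) (by omega) (by omega)
        have i1 := ih (n+1) (by omega) (by omega)
        have i2 := ih (n+2) (by omega) (by omega)
        norm_num at e
        linear_combination e - i1 - i2 - t (n+2) * hx0
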